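/- Fix A, B > 0 and Λ > 0, and for C ∈ (0, A + B) define τ_Λ(C) = [(A−C)C + B(A+B)(1 − (1 + CΛ) e^{−CΛ})]/(C(A+B)(A+B−C)). Then, as C → 0⁺, τ_Λ(C) = (1/(A+B))·( A/(A+B) + C·B·(Λ²/2 − 1/(A+B)²) ) + O(C²); i.e. the cut-off mean duration is, to first order in the small rate C, an affine function of C with constant term A/(A+B)² and slope B(Λ²/2 − 1/(A+B)²)/(A+B). -/

import Mathlib

open Real Filter Asymptotics

/-- First-order expansion of the cut-off mean duration in the small escape rate `C`:
`τ_Λ(C) = (1/(A+B)) ( A/(A+B) + C B (Λ²/2 − 1/(A+B)²) ) + O(C²)` as `C → 0⁺`. -/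
theorem three_level_cutoff_mean_duration_small_C (A B Λ : ℝ)
    (hA : 0 < A) (hB : 0 < B) (hΛ : 0 < Λ)
    (τ : ℝ → ℝ)
    (hτ : τ = fun C => ((A - C) * C +
      B * (A + B) * (1 - (1 + C * Λ) * Real.exp (-C * Λ))) /
      (C * (A + B) * (A + B - C))) :
    (fun C : ℝ => τ C -
        1 / (A + B) * (A / (A + B) + C * B * (Λ ^ 2 / 2 - 1 / (A + B) ^ 2)))
      =O[nhdsWithin 0 (Set.Ioi 0)] (fun C : ℝ => C ^ 2) := by
  subst hτ
  have hS0 : (0:ℝ) < A + B := by linarith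
  set δ : ℝ := min ((A + B) / 2) (1 / Λ) with hδdef
  have hδ0 : 0 < δ := lt_min (by positivity) (by positivity)
  set K : ℝ := Λ ^ 2 * (A + B) / 2 - 1 / (A + B) with hK
  set M : ℝ := B * |K| / ((A + B) ^ 2 * ((A + B) / 2)) + 2 * B * Λ ^ 3 / (A + B)
    with hM
  apply IsBigO.of_bound M
  filter_upwards [Ioo_mem_nhdsGT_of_mem (Set.left_mem_Ico.2 hδ0)] with C hC
  obtain ⟨hC0, hCδ⟩ := hC
  have hCS : C < (A + B) / 2 := lt_of_lt_of_le hCδ (min_le_left _ _)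
  have hCΛ : C * Λ < 1 := (lt_div_iff₀ hΛ).1 (lt_of_lt_of_le hCδ (min_le_right _ _))
  have hu0 : 0 < C * Λ := by positivity
  have hSC : (A + B) / 2 ≤ A + B - C := by linarith
  have hSC0 : 0 < A + B - C := by linarith
  have hC' : C ≠ 0 := ne_of_gt hC0
  have hS' : A + B ≠ 0 := ne_of_gt hS0
  have hSC' : A + B - C ≠ 0 := ne_of_gt hSC0
  -- remainder of the exponential
  have hx1 : |(-C * Λ)| ≤ 1 := by
    rw [neg_mul, abs_neg, abs_of_pos hu0]; exact le_of_lt hCΛ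
  have hRb := Real.exp_bound hx1 (n := 3) (by norm_num)
  rw [Finset.sum_range_succ, Finset.sum_range_succ, Finset.sum_range_succ,
    Finset.sum_range_zero] at hRb
  simp only [pow_zero, pow_one, Nat.factorial] at hRb
  rw [neg_mul, abs_neg, abs_of_pos hu0] at hRb
  set R : ℝ := Real.exp (-C * Λ) - (1 - C * Λ + (C * Λ) ^ 2 / 2) with hRdef
  have hR : |R| ≤ (C * Λ) ^ 3 * (2 / 9) := by
    have : Real.exp (-C * Λ) -
        (0 + (-C * Λ) ^ 0 / 1 + -C * Λ / 1 + (-C * Λ) ^ 2 / (2 * 1)) = R := by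
      rw [hRdef]; ring
    calc |R| = |Real.exp (-C * Λ) -
        (0 + (-C * Λ) ^ 0 / 1 + -C * Λ / 1 + (-C * Λ) ^ 2 / (2 * 1))| := by rw [this]
      _ ≤ (C * Λ) ^ 3 * (↑(Nat.succ 3) / (↑(3 * (2 * 1)) * 3)) := by
          convert hRb using 3 <;> norm_num
      _ = (C * Λ) ^ 3 * (2 / 9) := by norm_num
  set ρ : ℝ := (1 - (1 + C * Λ) * Real.exp (-C * Λ)) - (C * Λ) ^ 2 / 2 with hρdef
  have hρeq : ρ = -(C * Λ) ^ 3 / 2 - (1 + C * Λ) * R := by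
    rw [hρdef, hRdef]; ring
  have hρ : |ρ| ≤ (C * Λ) ^ 3 := by
    rw [hρeq]
    calc |(-(C * Λ) ^ 3 / 2 - (1 + C * Λ) * R)|
        ≤ |(-(C * Λ) ^ 3 / 2)| + |(1 + C * Λ) * R| := abs_sub _ _
      _ = (C * Λ) ^ 3 / 2 + (1 + C * Λ) * |R| := by
          rw [abs_mul, abs_of_pos (by positivity : (0:ℝ) < 1 + C * Λ), abs_div,
            abs_neg, abs_of_pos (by positivity : (0:ℝ) < (C * Λ) ^ 3)]
          norm_num
      _ ≤ (C * Λ) ^ 3 / 2 + 2 * ((C * Λ) ^ 3 * (2 / 9)) := by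
          have h2 : (1 + C * Λ) ≤ 2 := by linarith
          have := mul_le_mul h2 hR (abs_nonneg _) (by norm_num)
          linarith
      _ ≤ (C * Λ) ^ 3 := by nlinarith [pow_pos hu0 3]
  -- key algebraic identity
  have key : ((A - C) * C +
      B * (A + B) * (1 - (1 + C * Λ) * Real.exp (-C * Λ))) /
      (C * (A + B) * (A + B - C)) -
      1 / (A + B) * (A / (A + B) + C * B * (Λ ^ 2 / 2 - 1 / (A + B) ^ 2))
      = B * C ^ 2 * K / ((A + B) ^ 2 * (A + B - C)) + B * ρ / (C * (A + B - C)) := by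
    rw [hρdef, hK]
    field_simp
    ring
  rw [Real.norm_eq_abs, Real.norm_eq_abs, key]
  have h1 : |B * C ^ 2 * K / ((A + B) ^ 2 * (A + B - C))|
      ≤ B * |K| / ((A + B) ^ 2 * ((A + B) / 2)) * C ^ 2 := by
    rw [abs_div, abs_of_pos (by positivity : (0:ℝ) < (A + B) ^ 2 * (A + B - C)),
      abs_mul, abs_mul, abs_of_pos hB, abs_of_pos (pow_pos hC0 2)]
    rw [show B * |K| / ((A + B) ^ 2 * ((A + B) / 2)) * C ^ 2
      = B * C ^ 2 * |K| / ((A + B) ^ 2 * ((A + B) / 2)) by ring]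
    gcongr
  have h2 : |B * ρ / (C * (A + B - C))| ≤ 2 * B * Λ ^ 3 / (A + B) * C ^ 2 := by
    calc |B * ρ / (C * (A + B - C))| = B * |ρ| / (C * (A + B - C)) := by
          rw [abs_div, abs_mul, abs_of_pos hB,
            abs_of_pos (by positivity : (0:ℝ) < C * (A + B - C))]
      _ ≤ B * (C * Λ) ^ 3 / (C * ((A + B) / 2)) := by gcongr
      _ = 2 * B * Λ ^ 3 / (A + B) * C ^ 2 := by field_simp
  have habs2 : |C ^ 2| = C ^ 2 := abs_of_pos (pow_pos hC0 2)
  calc |B * C ^ 2 * K / ((A + B) ^ 2 * (A + B - C)) + B * ρ / (C * (A + B - C))|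
      ≤ |B * C ^ 2 * K / ((A + B) ^ 2 * (A + B - C))| + |B * ρ / (C * (A + B - C))| :=
        abs_add_le _ _
    _ ≤ B * |K| / ((A + B) ^ 2 * ((A + B) / 2)) * C ^ 2
        + 2 * B * Λ ^ 3 / (A + B) * C ^ 2 := add_le_add h1 h2
    _ = M * |C ^ 2| := by rw [habs2, hM]; ring
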